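/- Let d ≥ 1, let X ⊆ ℝ^d₊ be a convex set containing 0, let c : ℝ^d → ℝ be convex, differentiable, monotone non-decreasing on X with respect to the coordinatewise order, with c(0) = 0, and let v : X → ℝ. Call a pair (u, x̄) with u ∈ C and x̄ ∈ X feasible if u(x̄) − c(x̄) ≥ u(x) − c(x) for all x ∈ X. Then sup{ v(x̄) − u(x̄) : (u, x̄) feasible } = sup{ v(x) − ⟨∇c(x), x⟩ : x ∈ X }. Moreover, if x* ∈ X with all coordinates strictly positive attains the right-hand supremum, then the pair consisting of the Leontief-type function u*(x) = p*·min{x₁/x*₁, …, x_d/x*_d, 1} with p* = ⟨∇c(x*), x*⟩ together with x* is feasible and attains the left-hand supremum; the buyer pays p*, his surplus is v(x*) − ⟨∇c(x*), x*⟩, and the seller's revenue p* − c(x*) equals the Bregman divergence D_c(0, x*) = ⟨∇c(x*), x*⟩ − c(x*), which is nonnegative. -/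

import Mathlib

/-- Membership in the class `C`: concave on the nonnegative orthant, monotone
non-decreasing on it, nonnegative on it, and `u(0) = 0`. -/
def InClassC (d : ℕ) (u : (Fin d → ℝ) → ℝ) : Prop :=
  (∀ x y : Fin d → ℝ, (∀ i, 0 ≤ x i) → (∀ i, 0 ≤ y i) →
    ∀ t ∈ Set.Icc (0:ℝ) 1,
      t * u x + (1 - t) * u y ≤ u (t • x + (1 - t) • y)) ∧
  (∀ x y : Fin d → ℝ, (∀ i, 0 ≤ x i) → (∀ i, x i ≤ y i) → u x ≤ u y) ∧
  (∀ x : Fin d → ℝ, (∀ i, 0 ≤ x i) → 0 ≤ u x) ∧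
  u 0 = 0

open Set Filter Topology

/-- Slope limit helper: derivative from the right bounded by slopes. -/
lemma deriv_le_of_slope_right {g : ℝ → ℝ} {g' M : ℝ}
    (hg : HasDerivAt g g' 0) (h : ∀ t ∈ Ioo (0:ℝ) 1, (g t - g 0) / t ≤ M) :
    g' ≤ M := by
  have hs := hasDerivAt_iff_tendsto_slope.mp hg
  have hs' : Tendsto (slope g 0) (𝓝[>] 0) (𝓝 g') :=
    hs.mono_left (nhdsWithin_mono _ fun t ht => ne_of_gt ht)
  refine le_of_tendsto hs' ?_
  filter_upwards [Ioo_mem_nhdsGT_of_mem (by norm_num : (0:ℝ) ∈ Ico (0:ℝ) 1)]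
    with t ht
  have := h t ht
  simpa [slope_def_field, div_eq_inv_mul] using this

/-- Slope limit: derivative from the left at 1. -/
lemma slope_left_le {g : ℝ → ℝ} {g' M : ℝ}
    (hg : HasDerivAt g g' 1) (h : ∀ t ∈ Ioo (0:ℝ) 1, g 1 - g t ≤ (1 - t) * M) :
    g' ≤ M := by
  have hs := hasDerivAt_iff_tendsto_slope.mp hg
  have hs' : Tendsto (slope g 1) (𝓝[<] 1) (𝓝 g') :=
    hs.mono_left (nhdsWithin_mono _ fun t ht => ne_of_lt ht)
  refine le_of_tendsto hs' ?_
  filter_upwards [Ioo_mem_nhdsLT_of_mem (by norm_num : (1:ℝ) ∈ Ioc (0:ℝ) 1)]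
    with t ht
  have h1 : slope g 1 t = (g 1 - g t) / (1 - t) := by
    rw [slope_comm, slope_def_field]
  rw [h1, div_le_iff₀ (by linarith [ht.2])]
  linarith [h t ht]

/-- Gradient inequality for convex differentiable functions. -/
lemma gradIneq {n : ℕ} {c : (Fin n → ℝ) → ℝ} (hconv : ConvexOn ℝ Set.univ c)
    {x : Fin n → ℝ} {L : (Fin n → ℝ) →L[ℝ] ℝ} (h : HasFDerivAt c L x)
    (y : Fin n → ℝ) : L (y - x) ≤ c y - c x := by
  have hline : HasDerivAt (fun t : ℝ => x + t • (y - x)) (y - x) 0 := by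
    simpa using ((hasDerivAt_id (0:ℝ)).smul_const (y - x)).const_add x
  have hg : HasDerivAt (fun t : ℝ => c (x + t • (y - x))) (L (y - x)) 0 := by
    have h' : HasFDerivAt c L (x + (0:ℝ) • (y - x)) := by simpa using h
    exact h'.comp_hasDerivAt (0:ℝ) hline
  refine deriv_le_of_slope_right hg fun t ht => ?_
  have hcomb : c (x + t • (y - x)) ≤ (1 - t) * c x + t * c y := by
    have h2 := hconv.2 (mem_univ x) (mem_univ y) (by linarith [ht.2] : (0:ℝ) ≤ 1 - t)
      (le_of_lt ht.1) (by ring)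
    have : (1 - t) • x + t • y = x + t • (y - x) := by
      funext i; simp [smul_sub]; ring
    rw [this] at h2
    simpa [smul_eq_mul] using h2
  rw [div_le_iff₀ ht.1]
  simp only [zero_smul, add_zero]
  nlinarith [ht.1]

section Leon
variable {d : ℕ}

/-- Leontief-type utility with zero-coordinate handling. -/
noncomputable def leonF (x : Fin d → ℝ) (y : Fin d → ℝ) : ℝ :=
  min (⨅ i, if x i = 0 then (1:ℝ) else y i / x i) 1

variable [Nonempty (Fin d)] {x : Fin d → ℝ}

lemma leonF_le_one (y : Fin d → ℝ) : leonF x y ≤ 1 := min_le_right _ _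

lemma leonF_le (y : Fin d → ℝ) (i : Fin d) :
    leonF x y ≤ if x i = 0 then (1:ℝ) else y i / x i :=
  (min_le_left _ _).trans (ciInf_le (Set.Finite.bddBelow (Set.finite_range _)) i)

lemma leonF_nonneg (hx : ∀ i, 0 ≤ x i) {y : Fin d → ℝ} (hy : ∀ i, 0 ≤ y i) :
    0 ≤ leonF x y := by
  refine le_min (le_ciInf fun i => ?_) zero_le_one
  by_cases h : x i = 0
  · simp [h]
  · simp only [h, if_false]
    exact div_nonneg (hy i) (hx i)

lemma leonF_smul_le (hx : ∀ i, 0 ≤ x i) {y : Fin d → ℝ} (hy : ∀ i, 0 ≤ y i)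
    (i : Fin d) : leonF x y * x i ≤ y i := by
  by_cases h : x i = 0
  · simp [h, hy i]
  · have hxi : 0 < x i := lt_of_le_of_ne (hx i) (Ne.symm h)
    have := leonF_le (x := x) y i
    rw [if_neg h] at this
    calc leonF x y * x i ≤ y i / x i * x i := by nlinarith
      _ = y i := div_mul_cancel₀ _ h

lemma leonF_self (hx : ∀ i, 0 ≤ x i) : leonF x x = 1 := by
  have : ∀ i, (if x i = 0 then (1:ℝ) else x i / x i) = 1 := by
    intro i; by_cases h : x i = 0 <;> simp [h]
  simp [leonF, this]

lemma leonF_mono (hx : ∀ i, 0 ≤ x i) {y z : Fin d → ℝ} (hyz : ∀ i, y i ≤ z i) :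
    leonF x y ≤ leonF x z := by
  refine le_min (le_ciInf fun i => ?_) (leonF_le_one y)
  by_cases h : x i = 0
  · simp [h, leonF_le_one (x := x) y]
  · have hxi : 0 < x i := lt_of_le_of_ne (hx i) (Ne.symm h)
    rw [if_neg h]
    have hy := leonF_le (x := x) y i; rw [if_neg h] at hy
    exact hy.trans ((div_le_div_iff_of_pos_right hxi).mpr (hyz i))

lemma leonF_concave (hx : ∀ i, 0 ≤ x i) {y z : Fin d → ℝ} {t : ℝ}
    (ht0 : 0 ≤ t) (ht1 : t ≤ 1) :
    t * leonF x y + (1 - t) * leonF x z ≤ leonF x (t • y + (1 - t) • z) := by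
  refine le_min (le_ciInf fun i => ?_) ?_
  · by_cases h : x i = 0
    · rw [if_pos h]
      nlinarith [leonF_le_one (x := x) y, leonF_le_one (x := x) z]
    · rw [if_neg h]
      have hxi : 0 < x i := lt_of_le_of_ne (hx i) (Ne.symm h)
      have hy := leonF_le (x := x) y i; rw [if_neg h] at hy
      have hz := leonF_le (x := x) z i; rw [if_neg h] at hz
      have : (t • y + (1 - t) • z) i / x i = t * (y i / x i) + (1 - t) * (z i / x i) := by
        simp only [Pi.add_apply, Pi.smul_apply, smul_eq_mul]
        field_simp
      rw [this]
      nlinarith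
  · nlinarith [leonF_le_one (x := x) y, leonF_le_one (x := x) z]

end Leon

lemma leonF_zero' {d : ℕ} [Nonempty (Fin d)] {x : Fin d → ℝ} (hx : ∀ i, 0 ≤ x i)
    (h : ∃ i, x i ≠ 0) : leonF x 0 = 0 := by
  obtain ⟨i, hi⟩ := h
  refine le_antisymm ?_ (leonF_nonneg hx fun _ => le_refl 0)
  have := leonF_le (x := x) 0 i
  rw [if_neg hi] at this
  simpa using this

/-- Theorem 2: convex differentiable production cost. The buyer's
equilibrium surplus equals `sup_{x ∈ X} [v(x) − ⟨∇c(x), x⟩]` (here `Dc x` is the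
derivative of `c` at `x`, so `⟨∇c(x), x⟩ = Dc x x`). Moreover if `x*`, strictly
positive, attains the right-hand supremum, then the Leontief-type function
`u*(x) = p*·min{xᵢ/x*ᵢ, 1}` with `p* = Dc x* x*` forms a feasible pair with
`x*` attaining the left-hand supremum; the buyer pays `p* = u*(x*)`, his surplus
is `v(x*) − p*`, and the seller's revenue `p* − c(x*)` equals the Bregman
divergence `D_c(0, x*) = ⟨∇c(x*), x*⟩ − c(x*)`, which is nonnegative. -/
theorem stmt6 (d : ℕ) (hd : 1 ≤ d)
    (X : Set (Fin d → ℝ)) (hXconv : Convex ℝ X) (hX0 : (0 : Fin d → ℝ) ∈ X)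
    (hXpos : ∀ x ∈ X, ∀ i, 0 ≤ x i)
    (c : (Fin d → ℝ) → ℝ) (hcconv : ConvexOn ℝ Set.univ c)
    (Dc : (Fin d → ℝ) → (Fin d → ℝ) →L[ℝ] ℝ)
    (hDc : ∀ x : Fin d → ℝ, HasFDerivAt c (Dc x) x)
    (hcmono : ∀ x ∈ X, ∀ y ∈ X, (∀ i, x i ≤ y i) → c x ≤ c y)
    (hc0 : c 0 = 0)
    (v : (Fin d → ℝ) → ℝ) :
    sSup {s : ℝ | ∃ u : (Fin d → ℝ) → ℝ, ∃ xbar ∈ X, InClassC d u ∧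
        (∀ x ∈ X, u x - c x ≤ u xbar - c xbar) ∧ s = v xbar - u xbar}
      = sSup {s : ℝ | ∃ x ∈ X, s = v x - Dc x x} ∧
    (∀ xstar ∈ X, (∀ i, 0 < xstar i) →
      (∀ x ∈ X, v x - Dc x x ≤ v xstar - Dc xstar xstar) →
      ∀ ustar : (Fin d → ℝ) → ℝ,
        (∀ x : Fin d → ℝ,
          ustar x = (Dc xstar xstar) * min (⨅ i, x i / xstar i) 1) →
        InClassC d ustar ∧
        (∀ x ∈ X, ustar x - c x ≤ ustar xstar - c xstar) ∧
        ustar xstar = Dc xstar xstar ∧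
        v xstar - ustar xstar
          = sSup {s : ℝ | ∃ u : (Fin d → ℝ) → ℝ, ∃ xbar ∈ X, InClassC d u ∧
              (∀ x ∈ X, u x - c x ≤ u xbar - c xbar) ∧ s = v xbar - u xbar} ∧
        ustar xstar - c xstar = Dc xstar xstar - c xstar ∧
        0 ≤ Dc xstar xstar - c xstar) := by
  haveI : Nonempty (Fin d) := ⟨⟨0, hd⟩⟩
  set L := {s : ℝ | ∃ u : (Fin d → ℝ) → ℝ, ∃ xbar ∈ X, InClassC d u ∧
      (∀ x ∈ X, u x - c x ≤ u xbar - c xbar) ∧ s = v xbar - u xbar} with hLdef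
  set R := {s : ℝ | ∃ x ∈ X, s = v x - Dc x x} with hRdef
  -- basic positivity facts
  have hcx : ∀ x ∈ X, 0 ≤ c x := fun x hx => by
    have := hcmono 0 hX0 x hx (fun i => by simpa using hXpos x hx i)
    simpa [hc0] using this
  have hple : ∀ x : Fin d → ℝ, c x ≤ Dc x x := fun x => by
    have h := gradIneq hcconv (hDc x) 0
    simp only [zero_sub, map_neg, hc0, zero_sub] at h
    linarith
  have hp : ∀ x ∈ X, 0 ≤ Dc x x := fun x hx => (hcx x hx).trans (hple x)
  -- the Leontief utility for a given x
  have hsmulX : ∀ x ∈ X, ∀ m : ℝ, 0 ≤ m → m ≤ 1 → m • x ∈ X := by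
    intro x hx m hm0 hm1
    have := hXconv hX0 hx (by linarith : (0:ℝ) ≤ 1 - m) hm0 (by ring)
    simpa using this
  have hInC : ∀ x ∈ X, InClassC d (fun y => Dc x x * leonF x y) := by
    intro x hx
    have hxp := hXpos x hx
    have hpx := hp x hx
    refine ⟨?_, ?_, ?_, ?_⟩
    · intro y z hy hz t ht
      have hc := leonF_concave (x := x) hxp (y := y) (z := z) ht.1 ht.2
      dsimp only
      nlinarith
    · intro y z hy hyz
      exact mul_le_mul_of_nonneg_left (leonF_mono hxp hyz) hpx
    · intro y hy
      exact mul_nonneg hpx (leonF_nonneg hxp hy)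
    · by_cases hx0 : x = 0
      · subst hx0; simp
      · show Dc x x * leonF x 0 = 0
        rw [leonF_zero' hxp (Function.ne_iff.mp hx0), mul_zero]
  have hfeas : ∀ x ∈ X, ∀ y ∈ X,
      Dc x x * leonF x y - c y ≤ Dc x x * leonF x x - c x := by
    intro x hx y hy
    have hxp := hXpos x hx
    have hyp := hXpos y hy
    set m := leonF x y with hm
    have hm0 : 0 ≤ m := leonF_nonneg hxp hyp
    have hm1 : m ≤ 1 := leonF_le_one y
    have hmem : m • x ∈ X := hsmulX x hx m hm0 hm1
    have h1 : c (m • x) ≤ c y :=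
      hcmono _ hmem y hy fun i => by
        simpa [smul_eq_mul] using leonF_smul_le hxp hyp i
    have h2 := gradIneq hcconv (hDc x) (m • x)
    have h3 : Dc x (m • x - x) = m * Dc x x - Dc x x := by
      rw [map_sub, map_smul]; simp [smul_eq_mul]
    rw [h3] at h2
    rw [leonF_self hxp]
    nlinarith
  -- lower bound on u xbar for feasible pairs
  have hge : ∀ u : (Fin d → ℝ) → ℝ, ∀ xbar ∈ X, InClassC d u →
      (∀ x ∈ X, u x - c x ≤ u xbar - c xbar) → Dc xbar xbar ≤ u xbar := by
    intro u xbar hxbar hu hf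
    have hline : HasDerivAt (fun t : ℝ => t • xbar) xbar 1 := by
      simpa using (hasDerivAt_id (1:ℝ)).smul_const xbar
    have hg : HasDerivAt (fun t : ℝ => c (t • xbar)) (Dc xbar xbar) 1 := by
      have h' : HasFDerivAt c (Dc xbar) ((1:ℝ) • xbar) := by
        simpa using hDc xbar
      exact h'.comp_hasDerivAt (1:ℝ) hline
    refine slope_left_le hg fun t ht => ?_
    have hmem : t • xbar ∈ X := hsmulX xbar hxbar t ht.1.le ht.2.le
    have hconc := hu.1 xbar 0 (hXpos xbar hxbar) (fun i => le_refl 0) t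
      ⟨ht.1.le, ht.2.le⟩
    rw [hu.2.2.2] at hconc
    simp only [smul_zero, add_zero, mul_zero] at hconc
    have hf' := hf (t • xbar) hmem
    simp only [one_smul]
    linarith
  -- R ⊆ L
  have hRL : R ⊆ L := by
    rintro s ⟨x, hx, rfl⟩
    refine ⟨fun y => Dc x x * leonF x y, x, hx, hInC x hx, hfeas x hx, ?_⟩
    show v x - Dc x x = v x - Dc x x * leonF x x
    rw [leonF_self (hXpos x hx), mul_one]
  -- every element of L is dominated by an element of R
  have hLR : ∀ s ∈ L, ∃ r ∈ R, s ≤ r := by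
    rintro s ⟨u, xbar, hxbar, hu, hf, rfl⟩
    exact ⟨v xbar - Dc xbar xbar, ⟨xbar, hxbar, rfl⟩,
      by linarith [hge u xbar hxbar hu hf]⟩
  have hRne : R.Nonempty := ⟨v 0 - Dc 0 0, 0, hX0, rfl⟩
  have hLne : L.Nonempty := ⟨_, hRL hRne.choose_spec⟩
  have hsup : sSup L = sSup R := by
    by_cases hbR : BddAbove R
    · refine le_antisymm (csSup_le hLne fun s hs => ?_)
        (csSup_le_csSup ?_ hRne hRL)
      · obtain ⟨r, hr, hsr⟩ := hLR s hs
        exact hsr.trans (le_csSup hbR hr)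
      · obtain ⟨b, hb⟩ := hbR
        exact ⟨b, fun s hs => by
          obtain ⟨r, hr, hsr⟩ := hLR s hs
          exact hsr.trans (hb hr)⟩
    · have hbL : ¬ BddAbove L := fun ⟨b, hb⟩ => hbR ⟨b, fun r hr => hb (hRL hr)⟩
      rw [Real.sSup_of_not_bddAbove hbL, Real.sSup_of_not_bddAbove hbR]
  refine ⟨hsup, ?_⟩
  intro xstar hxstar hpos hopt ustar hustar
  have hleon : ∀ y, leonF xstar y = min (⨅ i, y i / xstar i) 1 := by
    intro y
    unfold leonF
    congr 1
    exact iInf_congr fun i => if_neg (ne_of_gt (hpos i))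
  have hustar_eq : ustar = fun y => Dc xstar xstar * leonF xstar y := by
    funext y
    rw [hustar y, hleon y]
  have hself : ustar xstar = Dc xstar xstar := by
    rw [hustar_eq]; simp [leonF_self (hXpos xstar hxstar)]
  have hbR : BddAbove R := ⟨v xstar - Dc xstar xstar, by rintro s ⟨x, hx, rfl⟩; exact hopt x hx⟩
  have hsupR : sSup R = v xstar - Dc xstar xstar :=
    le_antisymm (csSup_le hRne (by rintro s ⟨x, hx, rfl⟩; exact hopt x hx))
      (le_csSup hbR ⟨xstar, hxstar, rfl⟩)
  refine ⟨hustar_eq ▸ hInC xstar hxstar, ?_, hself, ?_, by rw [hself], by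
    linarith [hple xstar]⟩
  · intro x hx
    rw [hustar_eq]
    exact hfeas xstar hxstar x hx
  · rw [hself, hsup, hsupR]
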